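/- For every n ≥ 1, setting b(n) = ⌊(n+2)/φ⌋ − 1, one has A(n,i) = i for all i ≤ b(n), and A(n, b(n)+1) ≠ b(n)+1; that is, b(n) = ⌊(n+2)/φ⌋ − 1 is the last column of the initial fixed segment of row n of the Hurt-Sada array. -/

import Mathlib

/-- The golden ratio `(1 + √5)/2`. -/
noncomputable def phi : ℝ := (1 + Real.sqrt 5) / 2


lemma sqrt5_lt : Real.sqrt 5 < 2.24 := by
  rw [show (2.24:ℝ) = Real.sqrt (2.24^2) by rw [Real.sqrt_sq]; norm_num]
  apply Real.sqrt_lt_sqrt <;> norm_num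

lemma lt_sqrt5 : 2.23 < Real.sqrt 5 := by
  rw [show (2.23:ℝ) = Real.sqrt (2.23^2) by rw [Real.sqrt_sq]; norm_num]
  apply Real.sqrt_lt_sqrt <;> norm_num

lemma phi_sq : phi^2 = phi + 1 := by
  have h : Real.sqrt 5 ^ 2 = 5 := Real.sq_sqrt (by norm_num)
  unfold phi; ring_nf; nlinarith [h]

lemma phi_gt : (1.6:ℝ) < phi := by unfold phi; nlinarith [lt_sqrt5]
lemma phi_lt : phi < (1.62:ℝ) := by unfold phi; nlinarith [sqrt5_lt]

lemma phi_irr : Irrational phi := by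
  have h5 : Irrational (Real.sqrt 5) := (Nat.prime_five).irrational_sqrt
  unfold phi
  have := (h5.ratCast_add 1).div_natCast (by norm_num : (2:ℕ) ≠ 0)
  simpa using this

noncomputable def a (k : ℕ) : ℕ := ⌊(k:ℝ) * phi⌋₊

lemma phi_pos : (0:ℝ) < phi := by linarith [phi_gt]

lemma a_le (k : ℕ) : (a k : ℝ) ≤ k * phi :=
  Nat.floor_le (by have := phi_pos; positivity)

lemma lt_a (k : ℕ) : (k:ℝ) * phi < a k + 1 := Nat.lt_floor_add_one _

lemma mul_phi_ne (k m : ℕ) (hk : k ≠ 0) : (k:ℝ) * phi ≠ (m:ℝ) := by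
  have h := phi_irr.natCast_mul hk
  exact fun h' => (h.ne_nat m) h'

lemma a_lt (k : ℕ) (hk : k ≠ 0) : (a k : ℝ) < k * phi :=
  lt_of_le_of_ne (a_le k) (fun h => mul_phi_ne k (a k) hk h.symm)

lemma a_zero : a 0 = 0 := by simp [a]

lemma a_eq_iff (k m : ℕ) : a k = m ↔ (m:ℝ) ≤ k * phi ∧ (k:ℝ) * phi < m + 1 := by
  unfold a
  rw [Nat.floor_eq_iff (by have := phi_pos; positivity)]

lemma a_one : a 1 = 1 := by rw [a_eq_iff]; push_cast; constructor <;> nlinarith [phi_gt, phi_lt]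
lemma a_two : a 2 = 3 := by rw [a_eq_iff]; push_cast; constructor <;> nlinarith [phi_gt, phi_lt]
lemma a_three : a 3 = 4 := by rw [a_eq_iff]; push_cast; constructor <;> nlinarith [phi_gt, phi_lt]

lemma a_ge (k : ℕ) : k ≤ a k := Nat.le_floor (by nlinarith [phi_gt, Nat.cast_nonneg (α := ℝ) k])

lemma a_mono {k m : ℕ} (h : k ≤ m) : a k ≤ a m := by
  apply Nat.floor_mono
  have hh : (k:ℝ) ≤ m := by exact_mod_cast h
  exact mul_le_mul_of_nonneg_right hh (le_of_lt phi_pos)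

lemma gap1 (m : ℕ) : a m + 1 ≤ a (m+1) := by
  have h := a_le m
  refine Nat.le_floor ?_
  push_cast
  nlinarith [phi_gt]

lemma gap2 (m : ℕ) : a (m+1) ≤ a m + 2 := by
  have h := lt_a m
  have : a (m+1) < a m + 3 := by
    apply (Nat.floor_lt' (by omega)).mpr
    push_cast; nlinarith [phi_lt]
  omega

lemma a_ge2 (m : ℕ) (h : 2 ≤ m) : m + 1 ≤ a m := by
  refine Nat.le_floor ?_
  have : (2:ℝ) ≤ m := by exact_mod_cast h
  push_cast; nlinarith [phi_gt]

lemma a_upper (n : ℕ) : a (n+2) ≤ 2*n+3 := by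
  have : a (n+2) < 2*n+4 := by
    apply (Nat.floor_lt' (by omega)).mpr
    push_cast
    nlinarith [phi_lt, Nat.cast_nonneg (α := ℝ) n]
  omega

lemma a_upper' (n : ℕ) (h : 1 ≤ n) : a (n+2) ≤ 2*n+2 := by
  have h1 : (1:ℝ) ≤ n := by exact_mod_cast h
  have : a (n+2) < 2*n+3 := by
    apply (Nat.floor_lt' (by omega)).mpr
    push_cast
    nlinarith [phi_lt]
  omega

lemma I2 (n k : ℕ) (h1 : a (n+1) + (n+2) ≤ a k) (h2 : a k ≤ a (n+2) + (n+1)) :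
    a k = k + (n+1) := by
  have hk0 : k ≠ 0 := by
    intro h; rw [h, a_zero] at h1; omega
  have hak := a_lt k hk0
  have hak' := lt_a k
  have h3 : ((n:ℝ)+1) * phi < a (n+1) + 1 := by
    have := lt_a (n+1); push_cast at this; linarith
  have h4 : (a (n+2) : ℝ) ≤ ((n:ℝ)+2) * phi := by
    have := a_le (n+2); push_cast at this; linarith
  have h1' : (a (n+1) : ℝ) + (n+2) ≤ a k := by exact_mod_cast h1
  have h2' : (a k : ℝ) ≤ a (n+2) + (n+1) := by exact_mod_cast h2
  -- kφ > (n+1)φ²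
  have e1 : (k:ℝ) * phi > ((n:ℝ)+1) * (phi^2) := by nlinarith [phi_sq]
  have e2 : (k:ℝ) > ((n:ℝ)+1) * phi := by
    by_contra hc
    push_neg at hc
    have := mul_le_mul_of_nonneg_right hc phi_pos.le
    nlinarith [phi_sq]
  have e3 : (k:ℝ) * phi < ((n:ℝ)+2) * (phi^2) := by nlinarith [phi_sq]
  have e4 : (k:ℝ) < ((n:ℝ)+2) * phi := by
    by_contra hc
    push_neg at hc
    have := mul_le_mul_of_nonneg_right hc phi_pos.le
    nlinarith [phi_sq]
  have hphi1 : (0:ℝ) < phi - 1 := by linarith [phi_gt]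
  have m1 := mul_lt_mul_of_pos_right e2 hphi1
  have m2 := mul_lt_mul_of_pos_right e4 hphi1
  rw [a_eq_iff]
  constructor
  · push_cast; nlinarith [phi_sq]
  · push_cast; nlinarith [phi_sq]

lemma D (k m : ℕ) (hm : 1 ≤ m) : a k ≠ a m + m := by
  intro h
  have hm0 : m ≠ 0 := by omega
  have hk0 : k ≠ 0 := by
    intro hk; rw [hk, a_zero] at h; have := a_ge m; omega
  have h1 := a_lt k hk0
  have h2 := lt_a k
  have h3 := a_lt m hm0
  have h4 := lt_a m
  have hc : ((a k : ℕ) : ℝ) = (a m : ℝ) + m := by exact_mod_cast h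
  have p3 : (a k : ℝ) < (m:ℝ) * phi + m := by rw [hc]; linarith
  have p4 : (m:ℝ) * phi + m < (a k : ℝ) + 1 := by rw [hc]; linarith
  have q1 : (k:ℝ) > (a k : ℝ) * (phi - 1) := by nlinarith [phi_sq, phi_gt]
  have q2 : (k:ℝ) < ((a k : ℝ)+1) * (phi - 1) := by nlinarith [phi_sq, phi_gt]
  have q3 : (m:ℝ) > (a k : ℝ) * (2 - phi) := by nlinarith [phi_sq, phi_gt, phi_lt]
  have q4 : (m:ℝ) < ((a k : ℝ)+1) * (2 - phi) := by nlinarith [phi_sq, phi_gt, phi_lt]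
  have r1 : (a k : ℝ) < (k:ℝ) + m := by nlinarith
  have r2 : (k:ℝ) + m < (a k : ℝ) + 1 := by nlinarith
  have n1 : a k < k + m := by exact_mod_cast r1
  have n2 : k + m < a k + 1 := by exact_mod_cast r2
  omega

lemma I1 (m k : ℕ) (hm : 1 ≤ m) (hk : k + m = a m + 1) (hgap : a (m+1) = a m + 2) :
    a k = m := by
  have hm0 : m ≠ 0 := by omega
  have h3 := a_lt m hm0
  have h4 := lt_a m
  have h5 : (a m : ℝ) + 2 ≤ ((m:ℝ)+1) * phi := by
    have := a_le (m+1); rw [hgap] at this; push_cast at this; linarith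
  have h5' : (a m : ℝ) + 2 < ((m:ℝ)+1) * phi := by
    rcases lt_or_eq_of_le h5 with h | h
    · exact h
    · exfalso; exact mul_phi_ne (m+1) (a m + 2) (by omega) (by push_cast; linarith)
  have hkc : (k:ℝ) = (a m : ℝ) + 1 - m := by
    have h : (k:ℝ) + m = (a m : ℝ) + 1 := by exact_mod_cast hk
    linarith
  rw [a_eq_iff]
  constructor
  · rw [hkc]; nlinarith [phi_sq, phi_gt]
  · rw [hkc]; nlinarith [phi_sq, phi_gt]

lemma floor_div_phi (m : ℕ) : ⌊(m:ℝ) / phi⌋₊ = a m - m := by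
  have h : (m:ℝ) / phi = m * phi - m := by
    rw [div_eq_iff (ne_of_gt phi_pos)]; nlinarith [phi_sq]
  rw [h, Nat.floor_sub_natCast]; rfl

/-- The Hurt-Sada array `A : ℕ → ℕ → ℕ`.  Row `0` is the identity sequence;
row `n+1` is obtained from row `n` by moving the entry `n+1` (located at the unique
position `p` with `A n p = n+1`) by `n+1` places to the right, shifting the jumped-over
entries one place left. -/
noncomputable def A : ℕ → ℕ → ℕ
  | 0, k => k
  | n + 1, j =>
    let p := sInf {i | A n i = n + 1}
    if j < p then A n j
    else if j < p + (n + 1) then A n (j + 1)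
    else if j = p + (n + 1) then n + 1
    else A n j

lemma inv (n : ℕ) :
    (∀ j, j + (n+3) ≤ a (n+2) → A n j = j) ∧
    (∀ j, a (n+1) ≤ j → A n j = j) ∧
    (∀ v j, n+1 ≤ v → j + (n+2) = a (v+1) → a (v+1) ≤ a (n+1) + (n+1) → A n j = v) ∧
    (∀ v j, v ≤ n → j + (n+2) = a (v+1) + (v+1) → a (n+2) ≤ a (v+1) + (v+1) → A n j = v) := by
  induction n with
  | zero =>
    refine ⟨fun j _ => rfl, fun j _ => rfl, ?_, ?_⟩
    · intro v j hv h1 h2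
      exfalso
      have h3 : a 2 ≤ a (v+1) := a_mono (by omega)
      rw [a_one] at h2; rw [a_two] at h3; omega
    · intro v j hv h1 h2
      exfalso
      interval_cases v
      rw [a_one] at h1 h2; rw [a_two] at h2; omega
  | succ n ih =>
    obtain ⟨Ha, Hb, Hc, Hd⟩ := ih
    simp only [show n+1+3 = n+4 from rfl, show n+1+2 = n+3 from rfl,
      show n+1+1 = n+2 from rfl]
    have hge : n + 2 ≤ a (n+2) := a_ge _
    set p := a (n+2) - (n+2) with hp
    have hpn : p + (n+2) = a (n+2) := by omega
    have hupper : a (n+2) ≤ 2*n+3 := a_upper n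
    have hg1 := gap1 (n+2)
    have hg2 := gap2 (n+2)
    have hg1' := gap1 (n+1)
    have hg2' := gap2 (n+1)
    have e32 : a (n+2+1) = a (n+3) := rfl
    have e21 : a (n+1+1) = a (n+2) := rfl
    rw [e32] at hg1 hg2
    rw [e21] at hg1' hg2'
    have hmem : A n p = n + 1 := by
      rcases Nat.eq_zero_or_pos n with h0 | h1
      · subst h0
        have hp1 : p = 1 := by rw [hp, a_two]
        rw [hp1]; rfl
      · refine Hc (n+1) p (le_refl _) (by omega) (by omega)
    have hlow : ∀ i, i < p → A n i = i := fun i hi => Ha i (by omega)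
    have hinf : sInf {i | A n i = n+1} = p := by
      refine le_antisymm (Nat.sInf_le hmem) ?_
      by_contra hcon
      push_neg at hcon
      have hne : {i | A n i = n+1}.Nonempty := ⟨p, hmem⟩
      have hmem2 : A n (sInf {i | A n i = n+1}) = n+1 := Nat.sInf_mem hne
      have heq := hlow _ hcon
      omega
    have hA : ∀ j, A (n+1) j =
        if j < p then A n j
        else if j < p + (n + 1) then A n (j + 1)
        else if j = p + (n + 1) then n + 1
        else A n j := by
      intro j
      conv_lhs => rw [A]
      rw [hinf]
    refine ⟨?_, ?_, ?_, ?_⟩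
    · -- (a')
      intro j hj
      rw [hA]
      by_cases hlt : j < p
      · rw [if_pos hlt]; exact Ha j (by omega)
      · have hjeq : j = p := by omega
        have hgap : a (n+3) = a (n+2) + 2 := by omega
        subst hjeq
        rw [if_neg hlt, if_pos (by omega)]
        have hn1 : 1 ≤ n := by
          by_contra h0
          have hn0 : n = 0 := by omega
          subst hn0
          rw [a_three, a_two] at hgap; omega
        have hup' := a_upper' n hn1
        have hI1 : a (p+1) = n+2 := I1 (n+2) (p+1) (by omega) (by omega) (by rw [e32] at hgap ⊢; exact hgap)
        refine Hd p (p+1) (by omega) (by omega) (by omega)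
    · -- (b')
      intro j hj
      have hm : a (n+1) ≤ a (n+2) := a_mono (by omega)
      rw [hA, if_neg (by omega), if_neg (by omega), if_neg (by omega)]
      exact Hb j (by omega)
    · -- (c')
      intro v j hv h1 h2
      have hd := D (v+1) (n+2) (by omega)
      have hmono : a (n+3) ≤ a (v+1) := a_mono (by omega)
      rw [hA, if_neg (by omega), if_pos (by omega)]
      by_cases hc2 : a (v+1) ≤ a (n+1) + (n+1)
      · exact Hc v (j+1) (by omega) (by omega) hc2
      · push_neg at hc2
        have hI2 : a (v+1) = (v+1) + (n+1) := I2 n (v+1) (by omega) (by omega)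
        have hbv : a (n+1) ≤ j+1 := by omega
        have hb := Hb (j+1) hbv
        omega
    · -- (d')
      intro v j hv h1 h2
      by_cases hveq : v = n+1
      · have hav : a (v+1) = a (n+2) := by subst hveq; rfl
        rw [hA, if_neg (by omega), if_neg (by omega), if_pos (by omega)]
        omega
      · have hvn : v ≤ n := by omega
        have hmono : a (v+1) ≤ a (n+1) := a_mono (by omega)
        rw [hA, if_neg (by omega), if_pos (by omega)]
        exact Hd v (j+1) hvn (by omega) (by omega)

theorem initial_fixed_segment (n : ℕ) (hn : 1 ≤ n) :
    (∀ i ≤ ⌊((n : ℝ) + 2) / phi⌋₊ - 1, A n i = i) ∧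
      A n ((⌊((n : ℝ) + 2) / phi⌋₊ - 1) + 1) ≠ (⌊((n : ℝ) + 2) / phi⌋₊ - 1) + 1 := by
  obtain ⟨Ha, Hb, Hc, Hd⟩ := inv n
  have hfl : ⌊((n:ℝ) + 2) / phi⌋₊ = a (n+2) - (n+2) := by
    rw [show ((n:ℝ)+2) = ((n+2:ℕ):ℝ) by push_cast; ring]
    exact floor_div_phi (n+2)
  have hge : n+3 ≤ a (n+2) := a_ge2 (n+2) (by omega)
  have hup := a_upper' n hn
  have hg2 := gap2 (n+1)
  have e21 : a (n+1+1) = a (n+2) := rfl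
  rw [e21] at hg2
  constructor
  · intro i hi
    rw [hfl] at hi
    exact Ha i (by omega)
  · rw [hfl]
    have hb1 : (a (n+2) - (n+2) - 1) + 1 = a (n+2) - (n+2) := by omega
    rw [hb1]
    have hval : A n (a (n+2) - (n+2)) = n+1 :=
      Hc (n+1) (a (n+2) - (n+2)) (le_refl _) (by omega) (by omega)
    omega
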